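/- Let p, q ≥ 1 be integers and ε ∈ (0,1]. Set a = p²q + (3/4)q and δ = ε/(√2 · a). Let μ ∈ ℝ^q and let B = diag(b₁², …, b_q²) be a diagonal matrix with b_z > 0 for every z. Define l(y) = (1+δ)^{−a} Φ(y | μ, (1+δ)^{−1/4} B) and u(y) = (1+δ)^{a} Φ(y | μ, (1+δ) B). Then (1/2) ∫_{ℝ^q} (√(u(y)) − √(l(y)))² dy ≤ ε². -/

import Mathlib

open Real MeasureTheory

/-- Gaussian density on `ℝ^q` with mean `μ` and diagonal covariance matrix whose
diagonal entries (variances) are given by `v`. -/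
noncomputable def gaussDensity {q : ℕ} (μ v : Fin q → ℝ) (x : Fin q → ℝ) : ℝ :=
  (2 * Real.pi) ^ (-(q : ℝ) / 2) * (∏ z, v z) ^ (-(1 : ℝ) / 2) *
    Real.exp (-(1 / 2) * ∑ z, (x z - μ z) ^ 2 / v z)

lemma g1_eq (m v : ℝ) : (fun x : ℝ => Real.exp (-(x - m) ^ 2 / (2 * v)))
    = fun x => Real.exp (-(1/(2*v)) * (x - m) ^ 2) := by
  funext x; ring_nf

lemma g1_integrable {m v : ℝ} (hv : 0 < v) :
    Integrable (fun x : ℝ => Real.exp (-(x - m) ^ 2 / (2 * v))) := by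
  rw [g1_eq]
  exact (integrable_exp_neg_mul_sq (by positivity)).comp_sub_right m

lemma g1_integral (m : ℝ) {v : ℝ} (hv : 0 < v) :
    ∫ x : ℝ, Real.exp (-(x - m) ^ 2 / (2 * v)) = Real.sqrt (2 * π * v) := by
  rw [g1_eq]
  rw [show (fun x : ℝ => Real.exp (-(1/(2*v)) * (x - m) ^ 2))
      = fun x => (fun t : ℝ => Real.exp (-(1/(2*v)) * t ^ 2)) (x - m) from rfl]
  rw [integral_sub_right_eq_self (fun t : ℝ => Real.exp (-(1/(2*v)) * t ^ 2)) m]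
  rw [integral_gaussian]
  congr 1
  field_simp

lemma G_prod {q : ℕ} (μ v : Fin q → ℝ) (y : Fin q → ℝ) :
    Real.exp (-(1/2 : ℝ) * ∑ z, (y z - μ z) ^ 2 / v z)
      = ∏ z, Real.exp (-(y z - μ z) ^ 2 / (2 * v z)) := by
  rw [← Real.exp_sum, Finset.mul_sum]
  congr 1
  exact Finset.sum_congr rfl fun z _ => by ring

lemma G_integrable {q : ℕ} (μ : Fin q → ℝ) {v : Fin q → ℝ} (hv : ∀ z, 0 < v z) :
    Integrable (fun y : Fin q → ℝ => Real.exp (-(1/2 : ℝ) * ∑ z, (y z - μ z) ^ 2 / v z)) := by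
  simp_rw [G_prod μ v]
  exact Integrable.fintype_prod (f := fun z (x : ℝ) => Real.exp (-(x - μ z) ^ 2 / (2 * v z)))
    (fun z => g1_integrable (hv z))

lemma G_integral {q : ℕ} (μ : Fin q → ℝ) {v : Fin q → ℝ} (hv : ∀ z, 0 < v z) :
    ∫ y : Fin q → ℝ, Real.exp (-(1/2 : ℝ) * ∑ z, (y z - μ z) ^ 2 / v z)
      = ∏ z, Real.sqrt (2 * π * v z) := by
  simp_rw [G_prod μ v]
  rw [integral_fintype_prod_volume_eq_prod
    (fun z (x : ℝ) => Real.exp (-(x - μ z) ^ 2 / (2 * v z)))]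
  exact Finset.prod_congr rfl fun z _ => g1_integral (μ z) (hv z)

lemma const_one {q : ℕ} {v : Fin q → ℝ} (hv : ∀ z, 0 < v z) :
    (2 * π) ^ (-(q : ℝ) / 2) * (∏ z, v z) ^ (-(1 : ℝ) / 2) * ∏ z, Real.sqrt (2 * π * v z)
      = 1 := by
  have h2π : (0:ℝ) < 2 * π := by positivity
  have hP : (0:ℝ) < ∏ z, v z := Finset.prod_pos fun z _ => hv z
  have h1 : ∏ z, Real.sqrt (2 * π * v z) = (2 * π) ^ ((q : ℝ) / 2) * (∏ z, v z) ^ ((1:ℝ)/2) := by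
    simp_rw [fun z => Real.sqrt_mul h2π.le (v z), Finset.prod_mul_distrib, Finset.prod_const,
      Finset.card_univ, Fintype.card_fin]
    congr 1
    · rw [Real.sqrt_eq_rpow, ← Real.rpow_natCast ((2*π) ^ ((1:ℝ)/2)) q, ← Real.rpow_mul h2π.le]
      congr 1; ring
    · simp_rw [Real.sqrt_eq_rpow]
      exact Real.finset_prod_rpow _ _ (fun z _ => (hv z).le) _
  rw [h1, show (2*π) ^ (-(q : ℝ) / 2) * (∏ z, v z) ^ (-(1:ℝ)/2) *
      ((2*π) ^ ((q : ℝ)/2) * (∏ z, v z) ^ ((1:ℝ)/2))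
      = ((2*π) ^ (-(q : ℝ) / 2) * (2*π) ^ ((q : ℝ)/2)) *
        ((∏ z, v z) ^ (-(1:ℝ)/2) * (∏ z, v z) ^ ((1:ℝ)/2)) from by ring,
    ← Real.rpow_add h2π, ← Real.rpow_add hP]
  norm_num
  rw [show -(q:ℝ)/2 + (q:ℝ)/2 = 0 by ring, Real.rpow_zero]

lemma sq_rpow_neg_half {y : ℝ} (hy : 0 < y) : ((y ^ 2 : ℝ)) ^ (-(1:ℝ)/2) = y⁻¹ := by
  rw [← Real.rpow_natCast y 2, ← Real.rpow_mul hy.le]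
  norm_num [Real.rpow_neg_one]

lemma coord {c b : ℝ} (hc : 0 < c) (hb : 0 < b) :
    (c * b ^ 2) ^ (-(1:ℝ)/2) * (c ^ (-(1:ℝ)/4) * b ^ 2) ^ (-(1:ℝ)/2) *
      (2 * (c * b ^ 2) * (c ^ (-(1:ℝ)/4) * b ^ 2) / ((c * b ^ 2) + (c ^ (-(1:ℝ)/4) * b ^ 2)))
    = 2 / (c ^ ((5:ℝ)/8) + c ^ (-(5:ℝ)/8)) := by
  set x := c ^ ((1:ℝ)/8) with hxdef
  have hx : 0 < x := Real.rpow_pos_of_pos hc _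
  have hpow : ∀ r : ℝ, c ^ r = x ^ (r * 8) := by
    intro r
    rw [hxdef, ← Real.rpow_mul hc.le]
    congr 1; ring
  have h1 : c = x ^ (8:ℕ) := by
    rw [← Real.rpow_natCast x 8, hxdef, ← Real.rpow_mul hc.le]; norm_num
  have h14 : c ^ (-(1:ℝ)/4) = (x ^ (2:ℕ))⁻¹ := by
    rw [hpow, ← Real.rpow_natCast x 2, ← Real.rpow_neg hx.le]
    norm_num
  have h58 : c ^ ((5:ℝ)/8) = x ^ (5:ℕ) := by
    rw [hpow, ← Real.rpow_natCast x 5]; norm_num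
  have h58' : c ^ (-(5:ℝ)/8) = (x ^ (5:ℕ))⁻¹ := by
    rw [hpow, ← Real.rpow_natCast x 5, ← Real.rpow_neg hx.le]; norm_num
  rw [h14, h58, h58', h1]
  have e1 : (x:ℝ) ^ (8:ℕ) * b ^ 2 = (x ^ (4:ℕ) * b) ^ 2 := by ring
  have e2 : ((x:ℝ) ^ (2:ℕ))⁻¹ * b ^ 2 = (b / x) ^ 2 := by
    field_simp
  rw [e1, e2, sq_rpow_neg_half (by positivity), sq_rpow_neg_half (by positivity)]
  have hx' : x ≠ 0 := ne_of_gt hx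
  have hb' : b ≠ 0 := ne_of_gt hb
  have hd1 : ((x ^ (4:ℕ) * b) ^ 2 + (b / x) ^ 2) ≠ 0 := by positivity
  have hd2 : ((x:ℝ) ^ (5:ℕ) + ((x:ℝ) ^ (5:ℕ))⁻¹) ≠ 0 := by positivity
  field_simp

lemma master {q : ℕ} (μ b : Fin q → ℝ) (hb : ∀ z, 0 < b z) {c : ℝ} (hc : 0 < c) (a : ℝ) :
    ∫ y : Fin q → ℝ,
        (Real.sqrt (c ^ a * gaussDensity μ (fun z => c * b z ^ 2) y) -
          Real.sqrt (c ^ (-a) * gaussDensity μ (fun z => c ^ (-(1 : ℝ) / 4) * b z ^ 2) y)) ^ 2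
      = c ^ a + c ^ (-a) - 2 * (2 / (c ^ ((5:ℝ)/8) + c ^ (-(5:ℝ)/8))) ^ ((q:ℝ)/2) := by
  have h2π : (0:ℝ) < 2 * π := by positivity
  set v1 : Fin q → ℝ := fun z => c * b z ^ 2 with hv1def
  set v2 : Fin q → ℝ := fun z => c ^ (-(1:ℝ)/4) * b z ^ 2 with hv2def
  have hv1 : ∀ z, 0 < v1 z := fun z => by
    have := hb z; simp only [hv1def]; positivity
  have hv2 : ∀ z, 0 < v2 z := fun z => by
    have h := hb z; have := Real.rpow_pos_of_pos hc (-(1:ℝ)/4)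
    simp only [hv2def]; positivity
  set w : Fin q → ℝ := fun z => 2 * v1 z * v2 z / (v1 z + v2 z) with hwdef
  have hw : ∀ z, 0 < w z := fun z => by
    have h1 := hv1 z; have h2 := hv2 z
    simp only [hwdef]; positivity
  set E : (Fin q → ℝ) → (Fin q → ℝ) → ℝ :=
    fun v y => -(1/2 : ℝ) * ∑ z, (y z - μ z) ^ 2 / v z with hEdef
  set A : ℝ := (2 * π) ^ (-(q : ℝ) / 2) with hAdef
  have hA : 0 < A := Real.rpow_pos_of_pos h2π _
  set P1 : ℝ := (∏ z, v1 z) ^ (-(1:ℝ)/2) with hP1def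
  set P2 : ℝ := (∏ z, v2 z) ^ (-(1:ℝ)/2) with hP2def
  have hP1 : 0 < P1 := Real.rpow_pos_of_pos (Finset.prod_pos fun z _ => hv1 z) _
  have hP2 : 0 < P2 := Real.rpow_pos_of_pos (Finset.prod_pos fun z _ => hv2 z) _
  set K1 : ℝ := c ^ a * A * P1 with hK1def
  set K2 : ℝ := c ^ (-a) * A * P2 with hK2def
  have hK1 : 0 < K1 := by
    have := Real.rpow_pos_of_pos hc a; simp only [hK1def]; positivity
  have hK2 : 0 < K2 := by
    have := Real.rpow_pos_of_pos hc (-a); simp only [hK2def]; positivity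
  set K3 : ℝ := Real.sqrt K1 * Real.sqrt K2 with hK3def
  -- pointwise identity
  have hEw : ∀ y, E v1 y / 2 + E v2 y / 2 = E w y := by
    intro y
    simp only [hEdef]
    have : ∀ z, (y z - μ z) ^ 2 / w z
        = ((y z - μ z) ^ 2 / v1 z + (y z - μ z) ^ 2 / v2 z) / 2 := by
      intro z
      have h1 := (hv1 z).ne'
      have h2 := (hv2 z).ne'
      have h3 := (by positivity : (0:ℝ) < v1 z + v2 z).ne'
      simp only [hwdef]
      field_simp
      ring
    rw [Finset.sum_congr rfl fun z _ => this z]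
    rw [← Finset.sum_div, Finset.sum_add_distrib]
    ring
  have hpt : ∀ y : Fin q → ℝ,
      (Real.sqrt (c ^ a * gaussDensity μ v1 y) - Real.sqrt (c ^ (-a) * gaussDensity μ v2 y)) ^ 2
      = K1 * Real.exp (E v1 y) + K2 * Real.exp (E v2 y) - 2 * K3 * Real.exp (E w y) := by
    intro y
    have h1 : c ^ a * gaussDensity μ v1 y = K1 * Real.exp (E v1 y) := by
      simp only [gaussDensity, hK1def, hAdef, hP1def, hEdef]; ring
    have h2 : c ^ (-a) * gaussDensity μ v2 y = K2 * Real.exp (E v2 y) := by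
      simp only [gaussDensity, hK2def, hAdef, hP2def, hEdef]; ring
    rw [h1, h2, Real.sqrt_mul hK1.le, Real.sqrt_mul hK2.le, ← Real.exp_half, ← Real.exp_half]
    have s1 : Real.sqrt K1 ^ 2 = K1 := Real.sq_sqrt hK1.le
    have s2 : Real.sqrt K2 ^ 2 = K2 := Real.sq_sqrt hK2.le
    have e1 : Real.exp (E v1 y) = Real.exp (E v1 y / 2) ^ 2 := by
      rw [← Real.exp_nat_mul]; congr 1; ring
    have e2 : Real.exp (E v2 y) = Real.exp (E v2 y / 2) ^ 2 := by
      rw [← Real.exp_nat_mul]; congr 1; ring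
    have e3 : Real.exp (E w y) = Real.exp (E v1 y / 2) * Real.exp (E v2 y / 2) := by
      rw [← Real.exp_add, hEw y]
    rw [e1, e2, e3, hK3def]
    nlinarith [s1, s2]
  have hG1 : Integrable (fun y : Fin q → ℝ => Real.exp (E v1 y)) := G_integrable μ hv1
  have hG2 : Integrable (fun y : Fin q → ℝ => Real.exp (E v2 y)) := G_integrable μ hv2
  have hG3 : Integrable (fun y : Fin q → ℝ => Real.exp (E w y)) := G_integrable μ hw
  rw [show (fun y : Fin q → ℝ =>
      (Real.sqrt (c ^ a * gaussDensity μ v1 y) - Real.sqrt (c ^ (-a) * gaussDensity μ v2 y)) ^ 2)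
      = fun y => K1 * Real.exp (E v1 y) + K2 * Real.exp (E v2 y) - 2 * K3 * Real.exp (E w y)
      from funext hpt]
  have hint1 : Integrable (fun y : Fin q → ℝ =>
      K1 * Real.exp (E v1 y) + K2 * Real.exp (E v2 y)) :=
    (hG1.const_mul K1).add (hG2.const_mul K2)
  have hint2 : Integrable (fun y : Fin q → ℝ => 2 * K3 * Real.exp (E w y)) :=
    hG3.const_mul (2 * K3)
  rw [integral_sub hint1 hint2,
    integral_add (hG1.const_mul K1) (hG2.const_mul K2),
    integral_const_mul, integral_const_mul, integral_const_mul,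
    G_integral μ hv1, G_integral μ hv2, G_integral μ hw]
  -- constants
  have hA1 : K1 * ∏ z, Real.sqrt (2 * π * v1 z) = c ^ a := by
    rw [hK1def, hAdef, hP1def, mul_assoc, mul_assoc, ← mul_assoc A]
    rw [const_one hv1, mul_one]
  have hA2 : K2 * ∏ z, Real.sqrt (2 * π * v2 z) = c ^ (-a) := by
    rw [hK2def, hAdef, hP2def, mul_assoc, mul_assoc, ← mul_assoc A]
    rw [const_one hv2, mul_one]
  have hA3 : K3 * ∏ z, Real.sqrt (2 * π * w z)
      = (2 / (c ^ ((5:ℝ)/8) + c ^ (-(5:ℝ)/8))) ^ ((q:ℝ)/2) := by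
    have hprodsqrt : ∏ z, Real.sqrt (2 * π * w z) = Real.sqrt (∏ z, (2 * π * w z)) := by
      rw [Real.sqrt_eq_rpow]
      rw [← Real.finset_prod_rpow _ _ (fun z _ => by positivity : ∀ z ∈ Finset.univ, (0:ℝ) ≤ 2 * π * w z)]
      exact Finset.prod_congr rfl fun z _ => (Real.sqrt_eq_rpow _)
    have hK3' : K3 = Real.sqrt (K1 * K2) := (Real.sqrt_mul hK1.le K2).symm
    rw [hprodsqrt, hK3', ← Real.sqrt_mul (by positivity)]
    have hinner : K1 * K2 * ∏ z, (2 * π * w z)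
        = (2 / (c ^ ((5:ℝ)/8) + c ^ (-(5:ℝ)/8))) ^ (q:ℕ) := by
      have hca : c ^ a * c ^ (-a) = 1 := by
        rw [← Real.rpow_add hc, add_neg_cancel, Real.rpow_zero]
      have hprodw : ∏ z, (2 * π * w z) = (2 * π) ^ (q:ℕ) * ∏ z, w z := by
        rw [Finset.prod_mul_distrib, Finset.prod_const, Finset.card_univ, Fintype.card_fin]
      have hAA : A * A * (2 * π) ^ (q:ℕ) = 1 := by
        rw [hAdef, ← Real.rpow_natCast (2 * π) q, ← Real.rpow_add h2π, ← Real.rpow_add h2π]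
        rw [show -(q:ℝ)/2 + -(q:ℝ)/2 + (q:ℕ) = 0 by push_cast; ring, Real.rpow_zero]
      have hP1' : P1 = ∏ z, (v1 z) ^ (-(1:ℝ)/2) := by
        rw [hP1def, ← Real.finset_prod_rpow _ _ (fun z _ => (hv1 z).le)]
      have hP2' : P2 = ∏ z, (v2 z) ^ (-(1:ℝ)/2) := by
        rw [hP2def, ← Real.finset_prod_rpow _ _ (fun z _ => (hv2 z).le)]
      calc K1 * K2 * ∏ z, (2 * π * w z)
          = (c ^ a * c ^ (-a)) * (A * A * (2 * π) ^ (q:ℕ)) * (P1 * P2 * ∏ z, w z) := by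
            rw [hK1def, hK2def, hprodw]; ring
        _ = P1 * P2 * ∏ z, w z := by rw [hca, hAA]; ring
        _ = ∏ z, ((v1 z) ^ (-(1:ℝ)/2) * (v2 z) ^ (-(1:ℝ)/2) * w z) := by
            rw [hP1', hP2', ← Finset.prod_mul_distrib, ← Finset.prod_mul_distrib]
        _ = ∏ _z : Fin q, (2 / (c ^ ((5:ℝ)/8) + c ^ (-(5:ℝ)/8))) := by
            refine Finset.prod_congr rfl fun z _ => ?_
            simpa only [hv1def, hv2def, hwdef] using coord hc (hb z)
        _ = (2 / (c ^ ((5:ℝ)/8) + c ^ (-(5:ℝ)/8))) ^ (q:ℕ) := by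
            rw [Finset.prod_const, Finset.card_univ, Fintype.card_fin]
    have hr : (0:ℝ) < 2 / (c ^ ((5:ℝ)/8) + c ^ (-(5:ℝ)/8)) := by
      have := Real.rpow_pos_of_pos hc ((5:ℝ)/8)
      have := Real.rpow_pos_of_pos hc (-(5:ℝ)/8)
      positivity
    rw [Real.sqrt_eq_rpow, hinner,
      ← Real.rpow_natCast (2 / (c ^ ((5:ℝ)/8) + c ^ (-(5:ℝ)/8))) q,
      ← Real.rpow_mul hr.le]
    congr 1; ring
  rw [hA1, hA2, mul_assoc, hA3]

lemma aux_cosh_bound {x : ℝ} (hx : |x| ≤ 1) :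
    Real.exp x + Real.exp (-x) ≤ 2 + (13/9) * x ^ 2 := by
  have h1 := Real.exp_bound hx (n := 3) (by norm_num)
  have h2 := Real.exp_bound (x := -x) (by rwa [abs_neg]) (n := 3) (by norm_num)
  have hs : ∑ m ∈ Finset.range 3, x ^ m / m.factorial = 1 + x + x ^ 2 / 2 := by
    simp [Finset.sum_range_succ, Nat.factorial]
  have hs2 : ∑ m ∈ Finset.range 3, (-x) ^ m / m.factorial = 1 - x + x ^ 2 / 2 := by
    simp [Finset.sum_range_succ, Nat.factorial]
    ring
  rw [hs] at h1; rw [hs2, abs_neg] at h2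
  have hcube : |x| ^ 3 ≤ x ^ 2 := by
    have h0 : |x| ^ 3 ≤ |x| ^ 2 := pow_le_pow_of_le_one (abs_nonneg x) hx (by norm_num)
    rwa [sq_abs] at h0
  have e1 := (abs_sub_le_iff.1 h1).1
  have e2 := (abs_sub_le_iff.1 h2).1
  have hf : (3:ℕ).factorial = 6 := by norm_num [Nat.factorial]
  rw [hf] at e1 e2
  push_cast at e1 e2
  nlinarith [hcube]


set_option maxHeartbeats 1000000 in
/-- The squared Hellinger width of the bracket
`[l, u] = [(1+δ)^{-a} Φ(·|μ,(1+δ)^{-1/4}B), (1+δ)^{a} Φ(·|μ,(1+δ)B)]`,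
with `a = p²q + (3/4)q`, `δ = ε/(√2 a)` and `B = diag(b₁²,…,b_q²)`, is at most `ε²`. -/
theorem stmt_11 (p q : ℕ) (hp : 1 ≤ p) (hq : 1 ≤ q) (ε : ℝ) (hε0 : 0 < ε) (hε1 : ε ≤ 1)
    (a δ : ℝ) (ha : a = (p : ℝ) ^ 2 * q + 3 / 4 * q) (hδ : δ = ε / (Real.sqrt 2 * a))
    (μ b : Fin q → ℝ) (hb : ∀ z, 0 < b z) :
    (1 / 2) * ∫ y : Fin q → ℝ,
        (Real.sqrt ((1 + δ) ^ a * gaussDensity μ (fun z => (1 + δ) * b z ^ 2) y) -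
          Real.sqrt ((1 + δ) ^ (-a) *
            gaussDensity μ (fun z => (1 + δ) ^ (-(1 : ℝ) / 4) * b z ^ 2) y)) ^ 2
      ≤ ε ^ 2 := by
  have hq1 : (1:ℝ) ≤ q := by exact_mod_cast hq
  have hp1 : (1:ℝ) ≤ p := by exact_mod_cast hp
  have hp2 : (1:ℝ) ≤ (p:ℝ)^2 := by nlinarith only [hp1]
  have ha' : (7/4 : ℝ) * q ≤ a := by
    rw [ha]
    linarith only [mul_nonneg (by linarith only [hp2] : (0:ℝ) ≤ (p:ℝ)^2 - 1)
      (by linarith only [hq1] : (0:ℝ) ≤ (q:ℝ))]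
  have ha0 : (0:ℝ) < a := by linarith only [ha', hq1]
  have hs2 : (0:ℝ) < Real.sqrt 2 := Real.sqrt_pos.2 (by norm_num)
  have hs2sq : Real.sqrt 2 ^ 2 = 2 := Real.sq_sqrt (by norm_num)
  have hs21 : (1:ℝ) ≤ Real.sqrt 2 := by nlinarith only [hs2, hs2sq]
  have hδ0 : 0 < δ := by rw [hδ]; positivity
  have hδle : δ ≤ 4/7 := by
    rw [hδ, div_le_iff₀ (by positivity)]
    linarith only [hε1, ha', hq1,
      mul_nonneg (by linarith only [hs21] : (0:ℝ) ≤ Real.sqrt 2 - 1) ha0.le]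
  have hc : (0:ℝ) < 1 + δ := by linarith only [hδ0]
  rw [master μ b hb hc a]
  set t := Real.log (1 + δ) with htdef
  have ht0 : 0 ≤ t := Real.log_nonneg (by linarith only [hδ0])
  have htδ : t ≤ δ := by
    have := Real.log_le_sub_one_of_pos hc
    simpa using this
  have hδa : δ * a = ε / Real.sqrt 2 := by
    rw [hδ]; field_simp
  have hca : (1 + δ) ^ a = Real.exp (t * a) := by
    rw [Real.rpow_def_of_pos hc]
  have hca' : (1 + δ) ^ (-a) = Real.exp (-(t * a)) := by
    rw [Real.rpow_def_of_pos hc]; congr 1; ring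
  have hc58 : (1 + δ) ^ ((5:ℝ)/8) = Real.exp (t * (5/8)) := by
    rw [Real.rpow_def_of_pos hc]
  have hc58' : (1 + δ) ^ (-(5:ℝ)/8) = Real.exp (-(t * (5/8))) := by
    rw [Real.rpow_def_of_pos hc]; congr 1; ring
  rw [hca, hca', hc58, hc58']
  set x := t * a with hxdef
  set s := t * (5/8 : ℝ) with hsdef
  have hx0 : 0 ≤ x := mul_nonneg ht0 ha0.le
  have hxle : x ≤ ε / Real.sqrt 2 := by
    rw [hxdef, ← hδa]
    exact mul_le_mul_of_nonneg_right htδ ha0.le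
  have hεs : ε / Real.sqrt 2 ≤ 1 := by
    rw [div_le_one hs2]; linarith only [hε1, hs21]
  have hx1 : |x| ≤ 1 := by rw [abs_of_nonneg hx0]; linarith only [hxle, hεs]
  have hs0 : 0 ≤ s := mul_nonneg ht0 (by norm_num)
  have hsle : s ≤ δ * (5/8) := mul_le_mul_of_nonneg_right htδ (by norm_num)
  have hs1 : |s| ≤ 1 := by rw [abs_of_nonneg hs0]; linarith only [hsle, hδle]
  have hx2 : x ^ 2 ≤ ε ^ 2 / 2 := by
    have h1 : x ^ 2 ≤ (ε / Real.sqrt 2) ^ 2 := pow_le_pow_left₀ hx0 hxle 2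
    have h2 : (ε / Real.sqrt 2) ^ 2 = ε ^ 2 / 2 := by
      rw [div_pow, hs2sq]
    linarith only [h1, h2]
  have hδsq : δ ^ 2 = ε ^ 2 / (2 * a ^ 2) := by
    rw [hδ, div_pow, mul_pow, hs2sq]
  have hqδ : (q:ℝ) * δ ^ 2 ≤ 8/49 * ε ^ 2 := by
    have hmm1 : (7/4:ℝ) * q * ((7/4:ℝ) * q) ≤ a * a :=
      mul_le_mul ha' ha' (by positivity) ha0.le
    have hmm2 : (q:ℝ) ≤ (q:ℝ) * (q:ℝ) := le_mul_of_one_le_left (by positivity) hq1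
    have haq : (49/16:ℝ) * q ≤ a ^ 2 := by nlinarith only [hmm1, hmm2]
    rw [hδsq, mul_div_assoc', div_le_iff₀ (by positivity)]
    nlinarith only [haq, sq_nonneg ε]
  have hqs : (q:ℝ) * s ^ 2 ≤ (25/64) * ((q:ℝ) * δ ^ 2) := by
    have h' : s ^ 2 ≤ (25/64) * δ ^ 2 := by
      nlinarith only [pow_le_pow_left₀ hs0 hsle 2]
    have := mul_le_mul_of_nonneg_left h' (by positivity : (0:ℝ) ≤ (q:ℝ))
    linarith only [this]
  have hcosh1 := aux_cosh_bound hx1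
  have hcosh2 := aux_cosh_bound hs1
  set D := Real.exp s + Real.exp (-s) with hDdef
  have hDexp : Real.exp s * Real.exp (-s) = 1 := by
    rw [← Real.exp_add]; simp
  have hD2 : 2 ≤ D := by
    nlinarith only [hDexp, Real.exp_pos s, sq_nonneg (Real.exp s - 1), hDdef]
  have hD0 : 0 < D := by linarith only [hD2]
  have hcross : 1 - (q:ℝ)/2 * ((13/18) * s ^ 2) ≤ (2 / D) ^ ((q:ℝ)/2) := by
    have h2D : (0:ℝ) < 2 / D := by positivity
    rw [Real.rpow_def_of_pos h2D]
    have hlog : Real.log (2 / D) = -Real.log (D / 2) := by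
      rw [show (2:ℝ)/D = (D/2)⁻¹ by field_simp, Real.log_inv]
    have hlog2 : Real.log (D / 2) ≤ D / 2 - 1 :=
      Real.log_le_sub_one_of_pos (by positivity)
    have hD1 : D / 2 - 1 ≤ (13/18) * s ^ 2 := by linarith only [hcosh2]
    have h1 : 1 + Real.log (2 / D) * ((q:ℝ)/2) ≤ Real.exp (Real.log (2 / D) * ((q:ℝ)/2)) := by
      linarith only [Real.add_one_le_exp (Real.log (2 / D) * ((q:ℝ)/2))]
    have h2 : -((13/18) * s ^ 2) * ((q:ℝ)/2) ≤ Real.log (2 / D) * ((q:ℝ)/2) := by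
      have hq0 : (0:ℝ) ≤ (q:ℝ)/2 := by positivity
      have h3 : -((13/18) * s ^ 2) ≤ Real.log (2 / D) := by
        rw [hlog]; linarith only [hlog2, hD1]
      exact mul_le_mul_of_nonneg_right h3 hq0
    linarith only [h1, h2]
  linarith only [hcross, hcosh1, hx2, hqs, hqδ, sq_nonneg ε]
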